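/- (Hoffman–Wielandt for symmetric matrices) Let A, E ∈ ℝ^{n×n} be symmetric, with eigenvalues λ1 ≥ … ≥ λn of A and λ̂1 ≥ … ≥ λ̂n of A + E, both in decreasing order. Then Σ_{i=1}^n (λ̂i - λi)² ≤ ‖E‖_F². -/

import Mathlib

open Matrix Polynomial Finset

lemma charpoly_diag (n : ℕ) (d : Fin n → ℝ) :
    (Matrix.diagonal d).charpoly = ∏ i : Fin n, (X - C (d i)) := by
  have h : charmatrix (Matrix.diagonal d) = Matrix.diagonal (fun i => (X : ℝ[X]) - C (d i)) := by
    ext i j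
    by_cases h : i = j
    · subst h; simp [charmatrix_apply_eq]
    · simp [charmatrix_apply_ne _ _ _ h, Matrix.diagonal_apply_ne _ h]
  rw [Matrix.charpoly, h, Matrix.det_diagonal]

lemma charpoly_conj {n : ℕ} (P Q M : Matrix (Fin n) (Fin n) ℝ)
    (h1 : P * Q = 1) (h2 : Q * P = 1) : (P * M * Q).charpoly = M.charpoly := by
  have comm : ∀ (N : Matrix (Fin n) (Fin n) ℝ[X]),
      N * Matrix.scalar (Fin n) (X : ℝ[X]) = Matrix.scalar (Fin n) (X : ℝ[X]) * N := by
    intro N; ext i j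
    simp [Matrix.scalar_apply, Matrix.mul_diagonal, Matrix.diagonal_mul, mul_comm]
  have key : charmatrix (P * M * Q) = P.map C * charmatrix M * Q.map C := by
    unfold charmatrix
    rw [Matrix.mul_sub, Matrix.sub_mul]
    congr 1
    · rw [comm (P.map C), Matrix.mul_assoc, ← Matrix.map_mul, h1,
        Matrix.map_one _ (map_zero C) (map_one C), Matrix.mul_one]
    · simp only [RingHom.mapMatrix_apply, Matrix.map_mul]
  have hdet : (P.map (C : ℝ →+* ℝ[X]) : Matrix (Fin n) (Fin n) ℝ[X]).det * (Q.map C).det = 1 := by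
    rw [← Matrix.det_mul, ← Matrix.map_mul, h1, Matrix.map_one _ (map_zero C) (map_one C),
      Matrix.det_one]
  rw [Matrix.charpoly, key, Matrix.det_mul, Matrix.det_mul, Matrix.charpoly]
  calc (P.map C).det * (charmatrix M).det * (Q.map C).det
      = (charmatrix M).det * ((P.map C).det * (Q.map C).det) := by ring
    _ = (charmatrix M).det := by rw [hdet, mul_one]

lemma multiset_ofFn (n : ℕ) (f : Fin n → ℝ) :
    Multiset.map f Finset.univ.val = ↑(List.ofFn f) := by
  rw [List.ofFn_eq_map, Fin.univ_def]
  rfl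

lemma multiset_comp_perm (n : ℕ) (a : Fin n → ℝ) (σ : Equiv.Perm (Fin n)) :
    Multiset.map (a ∘ σ) Finset.univ.val = Multiset.map a Finset.univ.val := by
  have : (Finset.univ.map σ.toEmbedding) = Finset.univ := Finset.map_univ_equiv σ
  calc Multiset.map (a ∘ σ) Finset.univ.val
      = Multiset.map a (Multiset.map σ Finset.univ.val) := by
        rw [Multiset.map_map]
    _ = Multiset.map a Finset.univ.val := by
        congr 1
        conv_rhs => rw [← this]
        rw [Finset.map_val]
        rfl

lemma exists_perm_comp (n : ℕ) (a b : Fin n → ℝ)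
    (h : Multiset.map a Finset.univ.val = Multiset.map b Finset.univ.val) :
    ∃ σ : Equiv.Perm (Fin n), a = b ∘ σ := by
  set σa := Tuple.sort a
  set σb := Tuple.sort b
  have ha : Monotone (a ∘ σa) := Tuple.monotone_sort a
  have hb : Monotone (b ∘ σb) := Tuple.monotone_sort b
  have hperm : (List.ofFn (a ∘ σa)).Perm (List.ofFn (b ∘ σb)) := by
    rw [← Multiset.coe_eq_coe, ← multiset_ofFn, ← multiset_ofFn,
      multiset_comp_perm, multiset_comp_perm, h]
  have heq : List.ofFn (a ∘ σa) = List.ofFn (b ∘ σb) :=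
    List.Perm.eq_of_sortedLE (List.sortedLE_ofFn_iff.mpr ha) (List.sortedLE_ofFn_iff.mpr hb) hperm
  have heq' : a ∘ σa = b ∘ σb := List.ofFn_injective heq
  refine ⟨σa.symm.trans σb, ?_⟩
  funext i
  have := congrFun heq' (σa.symm i)
  simpa using this

lemma monovary_of_antitone (n : ℕ) (f g : Fin n → ℝ) (hf : Antitone f) (hg : Antitone g) :
    Monovary f g := by
  intro i j h
  rcases le_or_gt j i with hle | hlt
  · exact hf hle
  · exact absurd (hg hlt.le) (not_le.mpr h)

lemma perm_sum_le (n : ℕ) (f g : Fin n → ℝ) (hf : Antitone f) (hg : Antitone g)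
    (σ : Equiv.Perm (Fin n)) : ∑ i, f i * g (σ i) ≤ ∑ i, f i * g i := by
  simpa using (monovary_of_antitone n f g hf hg).sum_smul_comp_perm_le_sum_smul (σ := σ)

lemma ds_sum_le (n : ℕ) (S : Matrix (Fin n) (Fin n) ℝ) (hS : S ∈ doublyStochastic ℝ (Fin n))
    (f g : Fin n → ℝ) (hf : Antitone f) (hg : Antitone g) :
    ∑ i, ∑ j, S i j * (f i * g j) ≤ ∑ i, f i * g i := by
  obtain ⟨w, hw0, hw1, hwS⟩ := exists_eq_sum_perm_of_mem_doublyStochastic hS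
  have hrw : ∀ i j, S i j = ∑ σ : Equiv.Perm (Fin n), w σ * (if σ i = j then 1 else 0) := by
    intro i j
    rw [← hwS]
    simp [Matrix.sum_apply, Equiv.Perm.permMatrix, PEquiv.toMatrix_apply, Equiv.toPEquiv_apply,
      mul_ite, mul_one, mul_zero]
  calc ∑ i, ∑ j, S i j * (f i * g j)
      = ∑ σ : Equiv.Perm (Fin n), w σ * ∑ i, f i * g (σ i) := by
        simp_rw [hrw, Finset.sum_mul]
        have hswap : ∀ x : Fin n, (∑ y, ∑ σ : Equiv.Perm (Fin n),
            (w σ * if σ x = y then 1 else 0) * (f x * g y))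
            = ∑ σ : Equiv.Perm (Fin n), ∑ y, (w σ * if σ x = y then 1 else 0) * (f x * g y) :=
          fun x => Finset.sum_comm
        simp_rw [hswap]
        rw [Finset.sum_comm]
        congr 1; funext σ
        rw [Finset.mul_sum]
        congr 1; funext x
        simp [mul_ite, ite_mul, Finset.sum_ite_eq]
    _ ≤ ∑ σ : Equiv.Perm (Fin n), w σ * ∑ i, f i * g i := by
        apply Finset.sum_le_sum
        intro σ _
        exact mul_le_mul_of_nonneg_left (perm_sum_le n f g hf hg σ) (hw0 σ)
    _ = ∑ i, f i * g i := by rw [← Finset.sum_mul, hw1, one_mul]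

lemma key (n : ℕ) (lam lamh : Fin n → ℝ) (hlam : Antitone lam) (hlamh : Antitone lamh)
    (U V : Matrix (Fin n) (Fin n) ℝ)
    (hU1 : U * Uᵀ = 1) (hU2 : Uᵀ * U = 1) (hV1 : V * Vᵀ = 1) (hV2 : Vᵀ * V = 1) :
    ∑ i, (lamh i - lam i) ^ 2 ≤
      ∑ i, ∑ j, ((V * Matrix.diagonal lamh * Vᵀ - U * Matrix.diagonal lam * Uᵀ) i j) ^ 2 := by
  set D := Matrix.diagonal lam with hD
  set M := Matrix.diagonal lamh with hM
  set A := U * D * Uᵀ with hA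
  set B := V * M * Vᵀ with hB
  set W := Uᵀ * V with hW
  have hWt : Wᵀ = Vᵀ * U := by rw [hW, Matrix.transpose_mul, Matrix.transpose_transpose]
  have hWWt : W * Wᵀ = 1 := by
    rw [hWt, hW, Matrix.mul_assoc, ← Matrix.mul_assoc V, hV1, Matrix.one_mul, hU2]
  have hWtW : Wᵀ * W = 1 := by
    rw [hWt, hW, Matrix.mul_assoc, ← Matrix.mul_assoc U, hU1, Matrix.one_mul, hV2]
  set S : Matrix (Fin n) (Fin n) ℝ := fun i j => (W i j) ^ 2 with hS
  have hSds : S ∈ doublyStochastic ℝ (Fin n) := by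
    rw [mem_doublyStochastic_iff_sum]
    refine ⟨fun i j => sq_nonneg _, fun i => ?_, fun j => ?_⟩
    · have := congrFun (congrFun hWWt i) i
      simp only [Matrix.mul_apply, Matrix.one_apply_eq, Matrix.transpose_apply] at this
      simpa [hS, sq] using this
    · have := congrFun (congrFun hWtW j) j
      simp only [Matrix.mul_apply, Matrix.one_apply_eq, Matrix.transpose_apply] at this
      simpa [hS, sq] using this
  -- symmetry of A and B
  have hAt : Aᵀ = A := by
    rw [hA, Matrix.transpose_mul, Matrix.transpose_mul, Matrix.transpose_transpose, hD,
      Matrix.diagonal_transpose, Matrix.mul_assoc]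
  have hBt : Bᵀ = B := by
    rw [hB, Matrix.transpose_mul, Matrix.transpose_mul, Matrix.transpose_transpose, hM,
      Matrix.diagonal_transpose, Matrix.mul_assoc]
  -- RHS as trace
  have hRHS : ∑ i, ∑ j, ((B - A) i j) ^ 2 = Matrix.trace ((B - A) * (B - A)) := by
    nth_rewrite 2 [show B - A = (B - A)ᵀ by rw [Matrix.transpose_sub, hAt, hBt]]
    simp [Matrix.trace, Matrix.mul_apply, Matrix.diag, sq]
    exact Finset.sum_comm
  have htrace_expand : Matrix.trace ((B - A) * (B - A)) =
      Matrix.trace (B * B) - 2 * Matrix.trace (A * B) + Matrix.trace (A * A) := by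
    rw [Matrix.sub_mul, Matrix.mul_sub, Matrix.mul_sub, Matrix.trace_sub, Matrix.trace_sub,
      Matrix.trace_sub, Matrix.trace_mul_comm B A]
    ring
  have htraceAA : Matrix.trace (A * A) = ∑ i, lam i ^ 2 := by
    have : A * A = U * (D * D) * Uᵀ := by
      rw [hA]
      calc U * D * Uᵀ * (U * D * Uᵀ) = U * D * (Uᵀ * U) * D * Uᵀ := by
            simp only [Matrix.mul_assoc]
        _ = U * (D * D) * Uᵀ := by rw [hU2, Matrix.mul_one]; simp only [Matrix.mul_assoc]
    rw [this, Matrix.trace_mul_comm, ← Matrix.mul_assoc, hU2, Matrix.one_mul, hD,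
      Matrix.diagonal_mul_diagonal, Matrix.trace_diagonal]
    simp [sq]
  have htraceBB : Matrix.trace (B * B) = ∑ i, lamh i ^ 2 := by
    have : B * B = V * (M * M) * Vᵀ := by
      rw [hB]
      calc V * M * Vᵀ * (V * M * Vᵀ) = V * M * (Vᵀ * V) * M * Vᵀ := by
            simp only [Matrix.mul_assoc]
        _ = V * (M * M) * Vᵀ := by rw [hV2, Matrix.mul_one]; simp only [Matrix.mul_assoc]
    rw [this, Matrix.trace_mul_comm, ← Matrix.mul_assoc, hV2, Matrix.one_mul, hM,
      Matrix.diagonal_mul_diagonal, Matrix.trace_diagonal]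
    simp [sq]
  have htraceAB : Matrix.trace (A * B) = ∑ i, ∑ j, S i j * (lam i * lamh j) := by
    have hABeq : A * B = U * (D * W * M * Wᵀ) * Uᵀ := by
      rw [hA, hB, hW, hWt]
      simp only [Matrix.mul_assoc]
      rw [hU1, Matrix.mul_one]
    rw [hABeq, Matrix.trace_mul_comm, ← Matrix.mul_assoc, hU2, Matrix.one_mul]
    rw [Matrix.trace]
    have : ∀ i, (D * W * M * Wᵀ).diag i = ∑ j, S i j * (lam i * lamh j) := by
      intro i
      simp only [Matrix.diag_apply, Matrix.mul_apply, Matrix.transpose_apply, hD, hM,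
        Matrix.diagonal_apply, hS]
      simp only [ite_mul, zero_mul, mul_ite, mul_zero, Finset.sum_ite_eq, Finset.sum_ite_eq',
        Finset.mem_univ, if_true]
      apply Finset.sum_congr rfl
      intro j _
      ring
    simp_rw [this]
  have hds := ds_sum_le n S hSds lam lamh hlam hlamh
  have hLHS : ∑ i, (lamh i - lam i) ^ 2 =
      ∑ i, lamh i ^ 2 - 2 * ∑ i, (lam i * lamh i) + ∑ i, lam i ^ 2 := by
    rw [Finset.mul_sum, ← Finset.sum_sub_distrib, ← Finset.sum_add_distrib]
    apply Finset.sum_congr rfl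
    intro i _
    ring
  rw [hLHS, hRHS, htrace_expand, htraceAA, htraceBB, htraceAB]
  linarith [hds]
lemma diag_decomp (n : ℕ) (A : Matrix (Fin n) (Fin n) ℝ) (hA : A.IsSymm) (lam : Fin n → ℝ)
    (hchar : A.charpoly = ∏ i : Fin n, (X - C (lam i))) :
    ∃ U : Matrix (Fin n) (Fin n) ℝ,
      U * Uᵀ = 1 ∧ Uᵀ * U = 1 ∧ A = U * Matrix.diagonal lam * Uᵀ := by
  have hH : A.IsHermitian := hA
  set U₀ : Matrix (Fin n) (Fin n) ℝ := (Matrix.IsHermitian.eigenvectorUnitary hH : Matrix (Fin n) (Fin n) ℝ) with hU₀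
  have hstar : star U₀ = U₀ᵀ := by
    rw [Matrix.star_eq_conjTranspose]
    ext i j
    simp [Matrix.conjTranspose_apply]
  have hmem := (Matrix.IsHermitian.eigenvectorUnitary hH).2
  rw [Matrix.mem_unitaryGroup_iff] at hmem
  have hU1 : U₀ * U₀ᵀ = 1 := by rw [← hstar]; exact hmem
  have hmem' := (Matrix.IsHermitian.eigenvectorUnitary hH).2
  rw [Matrix.mem_unitaryGroup_iff'] at hmem'
  have hU2 : U₀ᵀ * U₀ = 1 := by rw [← hstar]; exact hmem'
  set eig := hH.eigenvalues with heig
  have hspec : A = U₀ * Matrix.diagonal eig * U₀ᵀ := by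
    have := hH.spectral_theorem
    rw [Unitary.conjStarAlgAut_apply, ← hU₀, hstar] at this
    convert this using 3 <;> rfl
  have hchar2 : A.charpoly = ∏ i : Fin n, (X - C (eig i)) := by
    rw [hspec, charpoly_conj U₀ U₀ᵀ _ hU1 hU2, charpoly_diag]
  have hms : Multiset.map eig Finset.univ.val = Multiset.map lam Finset.univ.val := by
    have h1 : (∏ i : Fin n, (X - C (eig i))) = (∏ i : Fin n, (X - C (lam i))) := by
      rw [← hchar2, hchar]
    have h2 : ∀ (f : Fin n → ℝ), (∏ i : Fin n, (X - C (f i))) =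
        ((Multiset.map f Finset.univ.val).map (fun r => X - C r)).prod := by
      intro f
      rw [Finset.prod_eq_multiset_prod, Multiset.map_map]
      rfl
    have h3 := congrArg Polynomial.roots (h1)
    rw [h2 eig, h2 lam, Polynomial.roots_multiset_prod_X_sub_C,
      Polynomial.roots_multiset_prod_X_sub_C] at h3
    exact h3
  obtain ⟨σ, hσ⟩ := exists_perm_comp n eig lam hms
  set Qm : Matrix (Fin n) (Fin n) ℝ := fun i j => if σ i = j then 1 else 0 with hQm
  have hQ1 : Qm * Qmᵀ = 1 := by
    ext i j
    simp only [Matrix.mul_apply, Matrix.transpose_apply, Matrix.one_apply]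
    simp only [Matrix.mul_apply, Matrix.transpose_apply, hQm, ite_mul, one_mul, zero_mul,
      Finset.sum_ite_eq, Finset.mem_univ, if_true, Matrix.one_apply]
    simp [Equiv.apply_eq_iff_eq, eq_comm]
  have hQ2 : Qmᵀ * Qm = 1 := by
    ext i j
    simp only [Matrix.mul_apply, Matrix.transpose_apply]
    simp only [Matrix.mul_apply, Matrix.transpose_apply, hQm]
    rw [show (∑ k, (if σ k = i then (1:ℝ) else 0) * (if σ k = j then 1 else 0)) = ∑ x, (if x = i then (1:ℝ) else 0) * (if x = j then 1 else 0) from Equiv.sum_comp σ (fun x => (if x = i then (1:ℝ) else 0) * (if x = j then 1 else 0))]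
    simp only [ite_mul, one_mul, zero_mul, Finset.sum_ite_eq, Finset.mem_univ, if_true,
      Matrix.one_apply]
    simp [eq_comm]
  have hdiag : Matrix.diagonal eig = Qm * Matrix.diagonal lam * Qmᵀ := by
    ext i j
    simp only [Matrix.mul_apply, Matrix.transpose_apply, Matrix.diagonal_apply]
    simp only [Matrix.mul_apply, Matrix.transpose_apply, hQm, Matrix.diagonal_apply, hσ]
    simp only [ite_mul, one_mul, zero_mul, mul_ite, mul_zero, Finset.sum_ite_eq,
      Finset.sum_ite_eq', Finset.mem_univ, if_true]
    by_cases h : i = j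
    · subst h; simp
    · have : σ i ≠ σ j := fun hc => h (σ.injective hc)
      simp [h, this]
  refine ⟨U₀ * Qm, ?_, ?_, ?_⟩
  · rw [Matrix.transpose_mul]
    calc U₀ * Qm * (Qmᵀ * U₀ᵀ) = U₀ * (Qm * Qmᵀ) * U₀ᵀ := by simp only [Matrix.mul_assoc]
      _ = 1 := by rw [hQ1, Matrix.mul_one, hU1]
  · rw [Matrix.transpose_mul]
    calc Qmᵀ * U₀ᵀ * (U₀ * Qm) = Qmᵀ * (U₀ᵀ * U₀) * Qm := by simp only [Matrix.mul_assoc]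
      _ = 1 := by rw [hU2, Matrix.mul_one, hQ2]
  · rw [hspec, hdiag, Matrix.transpose_mul]
    simp only [Matrix.mul_assoc]

/-- Hoffman–Wielandt for real symmetric matrices: if `λ` and `λ̂` enumerate
(with multiplicity, in decreasing order) the eigenvalues of symmetric `A` and
`A + E`, then `∑ᵢ (λ̂ᵢ - λᵢ)² ≤ ‖E‖_F²`. -/
theorem stmt_9 (n : ℕ) (A E : Matrix (Fin n) (Fin n) ℝ)
    (hA : A.IsSymm) (hE : E.IsSymm)
    (lam lamh : Fin n → ℝ) (hlam : Antitone lam) (hlamh : Antitone lamh)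
    (hcharA : A.charpoly = ∏ i : Fin n, (Polynomial.X - Polynomial.C (lam i)))
    (hcharAE : (A + E).charpoly =
      ∏ i : Fin n, (Polynomial.X - Polynomial.C (lamh i))) :
    ∑ i, (lamh i - lam i) ^ 2 ≤ ∑ i, ∑ j, E i j ^ 2 := by
  obtain ⟨U, hU1, hU2, hAeq⟩ := diag_decomp n A hA lam hcharA
  obtain ⟨V, hV1, hV2, hBeq⟩ := diag_decomp n (A + E) (hA.add hE) lamh hcharAE
  have hEeq : E = V * Matrix.diagonal lamh * Vᵀ - U * Matrix.diagonal lam * Uᵀ := by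
    rw [← hAeq, ← hBeq]
    rw [add_sub_cancel_left]
  rw [hEeq]
  exact key n lam lamh hlam hlamh U V hU1 hU2 hV1 hV2
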